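/- (Proposition 2, non-asymptotic form) Suppose y_1,…,y_n are independent with E y_i = γ'(x_{i·}ᵀ β°) for a convex differentiable γ, and ε_i = y_i − E y_i are σ-subgaussian. Let a ∈ (0,1), α ∈ (0,1), set λ² = 2 a^{-2} σ² x_W² log(2p/α), let β̂ be a (measurable) random vector that almost surely minimizes β ↦ ℓ(β) + λ Σ_{k=1}^r ‖W_k β_k‖, and assume ζ_{a,W} > 0. If τ > 0 satisfies 8 (1 + a)² a^{-2} x_W² ζ_{a,W}^{-2} σ² log(2p/α) ≤ τ² and τ² < Δ²/4, then with probability at least 1 − α the following holds simultaneously for every group k and all 0 ≤ j_1, j_2 ≤ p_k (with the convention β̂_{0,k} = β°_{0,k} = 0): |β̂_{j_1,k} − β̂_{j_2,k}| ≤ τ if and only if β°_{j_1,k} = β°_{j_2,k}; i.e., merging levels whose β̂-coefficients differ by at most τ recovers the true model M_{β°}. -/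

import Mathlib

open MeasureTheory ProbabilityTheory
open scoped BigOperators ENNReal Classical

/-- The group norm `‖W_k β_k‖`. -/
noncomputable def groupNorm {r : ℕ} {p : Fin r → ℕ}
    (w β : ((k : Fin r) × Fin (p k)) → ℝ) (k : Fin r) : ℝ :=
  Real.sqrt (∑ j : Fin (p k), (w ⟨k, j⟩ * β ⟨k, j⟩) ^ 2)

/-- The sup norm `|v|_∞`. -/
noncomputable def supNorm {ι : Type*} [Fintype ι] (v : ι → ℝ) : ℝ := ⨆ c, |v c|

/-- The inner product `x_{i·}ᵀ β` of the `i`-th row of the design `X` with `β`. -/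
def dotRow {n r : ℕ} {p : Fin r → ℕ}
    (X : Fin n → ((k : Fin r) × Fin (p k)) → ℝ) (i : Fin n)
    (β : ((k : Fin r) × Fin (p k)) → ℝ) : ℝ :=
  ∑ c, X i c * β c

/-- The Euclidean norm `‖x_{j,k}‖` of column `c = (j,k)` of `X`. -/
noncomputable def colNorm {n r : ℕ} {p : Fin r → ℕ}
    (X : Fin n → ((k : Fin r) × Fin (p k)) → ℝ) (c : (k : Fin r) × Fin (p k)) : ℝ :=
  Real.sqrt (∑ i, (X i c) ^ 2)

/-- `x_W = max_{j,k} ‖x_{j,k}‖ / w_{j,k}`. -/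
noncomputable def xW {n r : ℕ} {p : Fin r → ℕ}
    (X : Fin n → ((k : Fin r) × Fin (p k)) → ℝ)
    (w : ((k : Fin r) × Fin (p k)) → ℝ) : ℝ :=
  ⨆ c, colNorm X c / w c

/-- The negative log-likelihood loss `ℓ(β) = ∑_i [γ(x_{i·}ᵀβ) − y_i x_{i·}ᵀβ]`
(at sample point `ω`). -/
noncomputable def loss {Ω : Type*} {n r : ℕ} {p : Fin r → ℕ}
    (X : Fin n → ((k : Fin r) × Fin (p k)) → ℝ) (γ : ℝ → ℝ)
    (y : Fin n → Ω → ℝ) (ω : Ω) (β : ((k : Fin r) × Fin (p k)) → ℝ) : ℝ :=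
  ∑ i, (γ (dotRow X i β) - y i ω * dotRow X i β)

/-- Coordinate `c` of `∇ℓ(β° + ν) − ∇ℓ(β°)`, which does not depend on `y`:
`∑_i (γ'(x_{i·}ᵀ(β°+ν)) − γ'(x_{i·}ᵀβ°)) x_{i,c}`. -/
noncomputable def gradDiff {n r : ℕ} {p : Fin r → ℕ}
    (X : Fin n → ((k : Fin r) × Fin (p k)) → ℝ) (γ : ℝ → ℝ)
    (βo ν : ((k : Fin r) × Fin (p k)) → ℝ) (c : (k : Fin r) × Fin (p k)) : ℝ :=
  ∑ i, (deriv γ (dotRow X i (βo + ν)) - deriv γ (dotRow X i βo)) * X i c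

/-- Membership in the cone `C_{a,W}` where `S = {k : βo_k ≠ 0}`. -/
def InCone {r : ℕ} {p : Fin r → ℕ}
    (βo w : ((k : Fin r) × Fin (p k)) → ℝ) (a : ℝ)
    (v : ((k : Fin r) × Fin (p k)) → ℝ) : Prop :=
  ∑ k : Fin r, (if ∀ j : Fin (p k), βo ⟨k, j⟩ = 0 then groupNorm w v k else 0)
    ≤ ∑ k : Fin r, (if ∀ j : Fin (p k), βo ⟨k, j⟩ = 0 then 0 else groupNorm w v k)
      + a * ∑ c, |w c * v c|

/-- The Cone Invertibility Factor
`ζ_{a,W} = inf_{0 ≠ ν ∈ C_{a,W}} |W⁻¹(∇ℓ(β°+ν) − ∇ℓ(β°))|_∞ / |ν|_∞`. -/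
noncomputable def cif {n r : ℕ} {p : Fin r → ℕ}
    (X : Fin n → ((k : Fin r) × Fin (p k)) → ℝ) (γ : ℝ → ℝ)
    (βo w : ((k : Fin r) × Fin (p k)) → ℝ) (a : ℝ) : ℝ :=
  sInf {z : ℝ | ∃ ν : ((k : Fin r) × Fin (p k)) → ℝ, ν ≠ 0 ∧ InCone βo w a ν ∧
    z = supNorm (fun c => gradDiff X γ βo ν c / w c) / supNorm ν}


/- ---------------- helper lemmas ---------------- -/

section sup
variable {ι : Type*} [Fintype ι]

lemma supNorm_nonneg (v : ι → ℝ) : 0 ≤ supNorm v :=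
  Real.iSup_nonneg fun _ => abs_nonneg _

lemma le_supNorm (v : ι → ℝ) (c : ι) : |v c| ≤ supNorm v := by
  unfold supNorm
  exact le_ciSup (f := fun c => |v c|) (Set.Finite.bddAbove (Set.finite_range _)) c

lemma supNorm_le [Nonempty ι] {v : ι → ℝ} {B : ℝ} (h : ∀ c, |v c| ≤ B) : supNorm v ≤ B :=
  ciSup_le h

lemma supNorm_pos {v : ι → ℝ} (hv : v ≠ 0) : 0 < supNorm v := by
  obtain ⟨c, hc⟩ := Function.ne_iff.mp hv
  exact lt_of_lt_of_le (abs_pos.mpr hc) (le_supNorm v c)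

lemma supNorm_zero : supNorm (0 : ι → ℝ) = 0 := by
  unfold supNorm
  rcases isEmpty_or_nonempty ι with h | h
  · exact Real.iSup_of_isEmpty _
  · simp
end sup

section gn
variable {r : ℕ} {p : Fin r → ℕ}

lemma groupNorm_nonneg (w β : ((k : Fin r) × Fin (p k)) → ℝ) (k : Fin r) :
    0 ≤ groupNorm w β k := Real.sqrt_nonneg _

lemma groupNorm_congr {w β β' : ((k : Fin r) × Fin (p k)) → ℝ} {k : Fin r}
    (h : ∀ j : Fin (p k), β ⟨k, j⟩ = β' ⟨k, j⟩) : groupNorm w β k = groupNorm w β' k := by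
  unfold groupNorm
  congr 1
  exact Finset.sum_congr rfl fun j _ => by rw [h j]

lemma groupNorm_eq_zero {w β : ((k : Fin r) × Fin (p k)) → ℝ} {k : Fin r}
    (h : ∀ j : Fin (p k), β ⟨k, j⟩ = 0) : groupNorm w β k = 0 := by
  unfold groupNorm
  rw [Finset.sum_eq_zero fun j _ => by rw [h j]; ring]
  exact Real.sqrt_zero

lemma groupNorm_add_le (w u v : ((k : Fin r) × Fin (p k)) → ℝ) (k : Fin r) :
    groupNorm w (fun c => u c + v c) k ≤ groupNorm w u k + groupNorm w v k := by
  set F : EuclideanSpace ℝ (Fin (p k)) := (WithLp.equiv 2 _).symm (fun j => w ⟨k, j⟩ * u ⟨k, j⟩)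
  set G : EuclideanSpace ℝ (Fin (p k)) := (WithLp.equiv 2 _).symm (fun j => w ⟨k, j⟩ * v ⟨k, j⟩)
  have h := norm_add_le F G
  rw [EuclideanSpace.norm_eq, EuclideanSpace.norm_eq, EuclideanSpace.norm_eq] at h
  simp only [Real.norm_eq_abs, sq_abs] at h
  have e1 : ∀ j, (F + G) j = w ⟨k, j⟩ * u ⟨k, j⟩ + w ⟨k, j⟩ * v ⟨k, j⟩ := fun _ => rfl
  have e2 : ∀ j, F j = w ⟨k, j⟩ * u ⟨k, j⟩ := fun _ => rfl
  have e3 : ∀ j, G j = w ⟨k, j⟩ * v ⟨k, j⟩ := fun _ => rfl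
  simp only [e1, e2, e3] at h
  unfold groupNorm
  refine le_trans (le_of_eq ?_) h
  congr 1
  exact Finset.sum_congr rfl fun j _ => by ring

lemma groupNorm_neg (w v : ((k : Fin r) × Fin (p k)) → ℝ) (k : Fin r) :
    groupNorm w (fun c => -v c) k = groupNorm w v k := by
  unfold groupNorm
  congr 1
  exact Finset.sum_congr rfl fun j _ => by ring

lemma groupNorm_sub_le (w β β' : ((k : Fin r) × Fin (p k)) → ℝ) (k : Fin r) :
    groupNorm w β k ≤ groupNorm w β' k + groupNorm w (fun c => β c - β' c) k := by
  have h := groupNorm_add_le w β' (fun c => β c - β' c) k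
  have e : groupNorm w (fun c => β' c + (β c - β' c)) k = groupNorm w β k :=
    groupNorm_congr fun j => by ring
  linarith [e ▸ h]

lemma groupNorm_ite (w : ((k : Fin r) × Fin (p k)) → ℝ) (hw : ∀ c, 0 < w c)
    (c : (k : Fin r) × Fin (p k)) (t : ℝ) :
    groupNorm w (fun x => if x = c then t else 0) c.fst = w c * |t| := by
  obtain ⟨k0, j0⟩ := c
  unfold groupNorm
  have e : ∀ j : Fin (p k0),
      (w ⟨k0, j⟩ * (if (⟨k0, j⟩ : (k : Fin r) × Fin (p k)) = ⟨k0, j0⟩ then t else 0)) ^ 2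
        = if j = j0 then (w ⟨k0, j0⟩ * t) ^ 2 else 0 := by
    intro j
    by_cases hj : j = j0
    · subst hj; simp
    · rw [if_neg hj, if_neg (by simp [Sigma.mk.inj_iff, hj]), mul_zero]
      ring
  rw [Finset.sum_congr rfl fun j _ => e j, Finset.sum_ite_eq' Finset.univ j0
    (fun _ => (w ⟨k0, j0⟩ * t) ^ 2)]
  simp only [Finset.mem_univ, if_true]
  rw [Real.sqrt_sq_eq_abs, abs_mul, abs_of_pos (hw ⟨k0, j0⟩)]
end gn

section dr
variable {n r : ℕ} {p : Fin r → ℕ}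

lemma dotRow_sub (X : Fin n → ((k : Fin r) × Fin (p k)) → ℝ) (i : Fin n)
    (β β' : ((k : Fin r) × Fin (p k)) → ℝ) :
    dotRow X i β - dotRow X i β' = ∑ c, X i c * (β c - β' c) := by
  unfold dotRow
  rw [← Finset.sum_sub_distrib]
  exact Finset.sum_congr rfl fun c _ => by ring

lemma dotRow_ite (X : Fin n → ((k : Fin r) × Fin (p k)) → ℝ) (i : Fin n)
    (β : ((k : Fin r) × Fin (p k)) → ℝ) (c : (k : Fin r) × Fin (p k)) (t : ℝ) :
    dotRow X i (fun x => β x + if x = c then t else 0) = dotRow X i β + t * X i c := by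
  unfold dotRow
  simp only [mul_add, Finset.sum_add_distrib]
  congr 1
  have e : ∀ x, X i x * (if x = c then t else 0) = if x = c then X i x * t else 0 := fun x => by
    rw [mul_ite, mul_zero]
  rw [Finset.sum_congr rfl fun x _ => e x, Finset.sum_ite_eq' Finset.univ c (fun x => X i x * t)]
  simp [mul_comm]
end dr

lemma tangent_le {γ : ℝ → ℝ} (hconv : ConvexOn ℝ Set.univ γ) (hdiff : Differentiable ℝ γ)
    (x y : ℝ) : deriv γ x * (y - x) ≤ γ y - γ x := by
  rcases lt_trichotomy x y with h | rfl | h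
  · have h1 := hconv.deriv_le_slope (Set.mem_univ x) (Set.mem_univ y) h (hdiff x)
    rw [slope_def_field] at h1
    have h2 := (le_div_iff₀ (by linarith : (0:ℝ) < y - x)).mp h1
    linarith
  · simp
  · have h1 := hconv.slope_le_deriv (Set.mem_univ y) (Set.mem_univ x) h (hdiff x)
    rw [slope_def_field] at h1
    have h2 := (div_le_iff₀ (by linarith : (0:ℝ) < x - y)).mp h1
    nlinarith

section main
variable {n r : ℕ} {p : Fin r → ℕ}

lemma loss_hasDerivAt (X : Fin n → ((k : Fin r) × Fin (p k)) → ℝ) (γ : ℝ → ℝ)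
    (hγdiff : Differentiable ℝ γ) (yv : Fin n → ℝ)
    (β : ((k : Fin r) × Fin (p k)) → ℝ) (c : (k : Fin r) × Fin (p k)) :
    HasDerivAt (fun t : ℝ => ∑ i, (γ (dotRow X i β + t * X i c)
        - yv i * (dotRow X i β + t * X i c)))
      (∑ i, (deriv γ (dotRow X i β) - yv i) * X i c) 0 := by
  have key : ∀ i : Fin n, HasDerivAt (fun t : ℝ => γ (dotRow X i β + t * X i c)
      - yv i * (dotRow X i β + t * X i c)) ((deriv γ (dotRow X i β) - yv i) * X i c) 0 := by
    intro i
    have haff : HasDerivAt (fun t : ℝ => dotRow X i β + t * X i c) (X i c) 0 := by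
      simpa using ((hasDerivAt_id (0:ℝ)).mul_const (X i c)).const_add (dotRow X i β)
    have h1 : HasDerivAt (fun t : ℝ => γ (dotRow X i β + t * X i c))
        (deriv γ (dotRow X i β + 0 * X i c) * X i c) 0 :=
      ((hγdiff (dotRow X i β + 0 * X i c)).hasDerivAt).comp 0 haff
    have h2 : HasDerivAt (fun t : ℝ => yv i * (dotRow X i β + t * X i c)) (yv i * X i c) 0 :=
      haff.const_mul (yv i)
    have h3 := h1.sub h2
    have e : deriv γ (dotRow X i β + 0 * X i c) * X i c - yv i * X i c
        = (deriv γ (dotRow X i β) - yv i) * X i c := by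
      rw [zero_mul, add_zero]; ring
    rw [e] at h3
    exact h3
  exact HasDerivAt.fun_sum (fun i _ => key i)

lemma coord_bound (X : Fin n → ((k : Fin r) × Fin (p k)) → ℝ) (γ : ℝ → ℝ)
    (hγdiff : Differentiable ℝ γ) (yv : Fin n → ℝ)
    (w : ((k : Fin r) × Fin (p k)) → ℝ) (hw : ∀ c, 0 < w c)
    (lam : ℝ) (hlam : 0 < lam) (βh : ((k : Fin r) × Fin (p k)) → ℝ)
    (hmin : ∀ β : ((k : Fin r) × Fin (p k)) → ℝ,
      (∑ i, (γ (dotRow X i βh) - yv i * dotRow X i βh)) + lam * ∑ k, groupNorm w βh k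
        ≤ (∑ i, (γ (dotRow X i β) - yv i * dotRow X i β)) + lam * ∑ k, groupNorm w β k)
    (c : (k : Fin r) × Fin (p k)) :
    |∑ i, (deriv γ (dotRow X i βh) - yv i) * X i c| ≤ lam * w c := by
  set f : ℝ → ℝ := fun t => ∑ i, (γ (dotRow X i βh + t * X i c)
    - yv i * (dotRow X i βh + t * X i c)) with hf_def
  set g : ℝ := ∑ i, (deriv γ (dotRow X i βh) - yv i) * X i c with hg_def
  have hf : HasDerivAt f g 0 := loss_hasDerivAt X γ hγdiff yv βh c
  have hf0 : f 0 = ∑ i, (γ (dotRow X i βh) - yv i * dotRow X i βh) := by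
    simp [hf_def]
  have key : ∀ t : ℝ, f 0 - lam * (w c * |t|) ≤ f t := by
    intro t
    set βt : ((k : Fin r) × Fin (p k)) → ℝ := fun x => βh x + if x = c then t else 0 with hβt
    have hdot : ∀ i, dotRow X i βt = dotRow X i βh + t * X i c := fun i => dotRow_ite X i βh c t
    have hft : f t = ∑ i, (γ (dotRow X i βt) - yv i * dotRow X i βt) := by
      simp only [hf_def, hdot]
    have hpen : ∑ k, groupNorm w βt k ≤ ∑ k, groupNorm w βh k + w c * |t| := by
      have step : ∀ k : Fin r, groupNorm w βt k
          ≤ groupNorm w βh k + (if k = c.fst then w c * |t| else 0) := by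
        intro k
        by_cases hk : k = c.fst
        · rw [if_pos hk]
          have h1 := groupNorm_add_le w βh (fun x => if x = c then t else 0) k
          have h2 : groupNorm w (fun x => if x = c then t else 0) k = w c * |t| := by
            rw [hk]; exact groupNorm_ite w hw c t
          calc groupNorm w βt k
              = groupNorm w (fun x => βh x + if x = c then t else 0) k := rfl
            _ ≤ groupNorm w βh k + groupNorm w (fun x => if x = c then t else 0) k := h1
            _ = groupNorm w βh k + w c * |t| := by rw [h2]
        · rw [if_neg hk, add_zero]
          refine le_of_eq (groupNorm_congr fun j => ?_)
          have hne : (⟨k, j⟩ : (k : Fin r) × Fin (p k)) ≠ c := fun h => hk (congrArg Sigma.fst h)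
          simp [hβt, hne]
      calc ∑ k, groupNorm w βt k
          ≤ ∑ k, (groupNorm w βh k + if k = c.fst then w c * |t| else 0) :=
            Finset.sum_le_sum fun k _ => step k
        _ = ∑ k, groupNorm w βh k + w c * |t| := by
            rw [Finset.sum_add_distrib, Finset.sum_ite_eq' Finset.univ c.fst
              (fun _ => w c * |t|)]
            simp
    have hmin' := hmin βt
    rw [← hf0, ← hft] at hmin'
    nlinarith [hmin', hpen, hlam]
  have tends := hasDerivAt_iff_tendsto_slope.mp hf
  have h_lower : -(lam * w c) ≤ g := by
    have t1 : Filter.Tendsto (slope f 0) (nhdsWithin 0 (Set.Ioi 0)) (nhds g) :=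
      tends.mono_left (nhdsWithin_mono 0 (fun x hx => by
        simpa using (ne_of_gt (Set.mem_Ioi.mp hx))))
    refine ge_of_tendsto t1 ?_
    filter_upwards [self_mem_nhdsWithin] with t ht
    have ht' : (0:ℝ) < t := Set.mem_Ioi.mp ht
    rw [slope_def_field]
    rw [le_div_iff₀ (by linarith : (0:ℝ) < t - 0)]
    have := key t
    rw [abs_of_pos ht'] at this
    nlinarith [this]
  have h_upper : g ≤ lam * w c := by
    have t1 : Filter.Tendsto (slope f 0) (nhdsWithin 0 (Set.Iio 0)) (nhds g) :=
      tends.mono_left (nhdsWithin_mono 0 (fun x hx => by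
        simpa using (ne_of_lt (Set.mem_Iio.mp hx))))
    refine le_of_tendsto t1 ?_
    filter_upwards [self_mem_nhdsWithin] with t ht
    have ht' : t < 0 := Set.mem_Iio.mp ht
    rw [slope_def_field]
    rw [div_le_iff_of_neg (by linarith : t - 0 < 0)]
    have := key t
    rw [abs_of_neg ht'] at this
    nlinarith [this]
  exact abs_le.mpr ⟨h_lower, h_upper⟩

end main

section main2
variable {n r : ℕ} {p : Fin r → ℕ}

lemma cone_lemma (X : Fin n → ((k : Fin r) × Fin (p k)) → ℝ) (γ : ℝ → ℝ)
    (hγconv : ConvexOn ℝ Set.univ γ) (hγdiff : Differentiable ℝ γ) (yv : Fin n → ℝ)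
    (βo βh w : ((k : Fin r) × Fin (p k)) → ℝ) (hw : ∀ c, 0 < w c)
    (a lam : ℝ) (ha : 0 < a) (hlam : 0 < lam)
    (hmin0 : (∑ i, (γ (dotRow X i βh) - yv i * dotRow X i βh)) + lam * ∑ k, groupNorm w βh k
      ≤ (∑ i, (γ (dotRow X i βo) - yv i * dotRow X i βo)) + lam * ∑ k, groupNorm w βo k)
    (hG : ∀ c, |∑ i, (deriv γ (dotRow X i βo) - yv i) * X i c| ≤ a * lam * w c) :
    InCone βo w a (fun c => βh c - βo c) := by
  set ν : ((k : Fin r) × Fin (p k)) → ℝ := fun c => βh c - βo c with hν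
  set G : ((k : Fin r) × Fin (p k)) → ℝ :=
    fun c => ∑ i, (deriv γ (dotRow X i βo) - yv i) * X i c with hG_def
  -- gradient inequality
  have hgrad : ∑ c, G c * ν c ≤
      (∑ i, (γ (dotRow X i βh) - yv i * dotRow X i βh))
        - (∑ i, (γ (dotRow X i βo) - yv i * dotRow X i βo)) := by
    have swap : ∑ c, G c * ν c
        = ∑ i, (deriv γ (dotRow X i βo) - yv i) * (dotRow X i βh - dotRow X i βo) := by
      simp only [hG_def, Finset.sum_mul]
      rw [Finset.sum_comm]
      refine Finset.sum_congr rfl fun i _ => ?_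
      rw [dotRow_sub X i βh βo, Finset.mul_sum]
      exact Finset.sum_congr rfl fun c _ => by simp only [hν]; ring
    rw [swap, ← Finset.sum_sub_distrib]
    refine Finset.sum_le_sum fun i _ => ?_
    have h1 := tangent_le hγconv hγdiff (dotRow X i βo) (dotRow X i βh)
    nlinarith [h1]
  have hlow : -(a * lam * ∑ c, |w c * ν c|) ≤ ∑ c, G c * ν c := by
    rw [Finset.mul_sum, ← Finset.sum_neg_distrib]
    refine Finset.sum_le_sum fun c _ => ?_
    have h1 : -(|G c| * |ν c|) ≤ G c * ν c := by
      rw [← abs_mul]; exact neg_abs_le _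
    have h2 : |G c| * |ν c| ≤ (a * lam * w c) * |ν c| :=
      mul_le_mul_of_nonneg_right (hG c) (abs_nonneg _)
    have h3 : |w c * ν c| = w c * |ν c| := by
      rw [abs_mul, abs_of_pos (hw c)]
    rw [h3]
    nlinarith [h1, h2]
  have hpen : ∑ k, groupNorm w βo k - ∑ k, groupNorm w βh k ≤
      ∑ k : Fin r, ((if ∀ j : Fin (p k), βo ⟨k, j⟩ = 0 then 0 else groupNorm w ν k)
        - (if ∀ j : Fin (p k), βo ⟨k, j⟩ = 0 then groupNorm w ν k else 0)) := by
    rw [← Finset.sum_sub_distrib]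
    refine Finset.sum_le_sum fun k _ => ?_
    by_cases hk : ∀ j : Fin (p k), βo ⟨k, j⟩ = 0
    · rw [if_pos hk, if_pos hk]
      have h0 : groupNorm w βo k = 0 := groupNorm_eq_zero hk
      have h1 : groupNorm w βh k = groupNorm w ν k :=
        groupNorm_congr fun j => by simp only [hν]; rw [hk j, sub_zero]
      rw [h0, h1]
    · rw [if_neg hk, if_neg hk]
      have h1 := groupNorm_sub_le w βo βh k
      have h2 : groupNorm w (fun c => βo c - βh c) k = groupNorm w ν k := by
        have := groupNorm_neg w ν k
        rw [← this]
        exact groupNorm_congr fun j => by simp [hν]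
      rw [h2] at h1
      linarith
  -- combine
  unfold InCone
  set A := ∑ k : Fin r, (if ∀ j : Fin (p k), βo ⟨k, j⟩ = 0 then groupNorm w ν k else 0)
  set B := ∑ k : Fin r, (if ∀ j : Fin (p k), βo ⟨k, j⟩ = 0 then 0 else groupNorm w ν k)
  set S := ∑ c, |w c * ν c|
  have hBA : ∑ k : Fin r, ((if ∀ j : Fin (p k), βo ⟨k, j⟩ = 0 then 0 else groupNorm w ν k)
      - (if ∀ j : Fin (p k), βo ⟨k, j⟩ = 0 then groupNorm w ν k else 0)) = B - A :=
    Finset.sum_sub_distrib _ _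
  rw [hBA] at hpen
  -- -a*lam*S ≤ lam*(Ωβo - Ωβh) ≤ lam*(B - A)
  have hchain : -(a * lam * S) ≤ lam * (B - A) := by
    have h1 : (∑ i, (γ (dotRow X i βh) - yv i * dotRow X i βh))
        - (∑ i, (γ (dotRow X i βo) - yv i * dotRow X i βo))
        ≤ lam * (∑ k, groupNorm w βo k - ∑ k, groupNorm w βh k) := by nlinarith [hmin0]
    have h2 : lam * (∑ k, groupNorm w βo k - ∑ k, groupNorm w βh k) ≤ lam * (B - A) :=
      mul_le_mul_of_nonneg_left hpen hlam.le
    linarith [hgrad, hlow]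
  nlinarith [hchain, hlam]

lemma cif_nonneg (X : Fin n → ((k : Fin r) × Fin (p k)) → ℝ) (γ : ℝ → ℝ)
    (βo w : ((k : Fin r) × Fin (p k)) → ℝ) (a : ℝ) : 0 ≤ cif X γ βo w a := by
  apply Real.sInf_nonneg
  rintro z ⟨ν', _, _, rfl⟩
  exact div_nonneg (supNorm_nonneg _) (supNorm_nonneg _)

lemma det_main (X : Fin n → ((k : Fin r) × Fin (p k)) → ℝ) (γ : ℝ → ℝ)
    (hγconv : ConvexOn ℝ Set.univ γ) (hγdiff : Differentiable ℝ γ) (yv : Fin n → ℝ)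
    (βo βh w : ((k : Fin r) × Fin (p k)) → ℝ) (hw : ∀ c, 0 < w c)
    (a lam : ℝ) (ha : 0 < a) (hlam : 0 < lam)
    (hmin : ∀ β : ((k : Fin r) × Fin (p k)) → ℝ,
      (∑ i, (γ (dotRow X i βh) - yv i * dotRow X i βh)) + lam * ∑ k, groupNorm w βh k
        ≤ (∑ i, (γ (dotRow X i β) - yv i * dotRow X i β)) + lam * ∑ k, groupNorm w β k)
    (hG : ∀ c, |∑ i, (deriv γ (dotRow X i βo) - yv i) * X i c| ≤ a * lam * w c) :
    cif X γ βo w a * supNorm (fun c => βh c - βo c) ≤ (1 + a) * lam := by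
  set ν : ((k : Fin r) × Fin (p k)) → ℝ := fun c => βh c - βo c with hν
  by_cases h0 : ν = 0
  · rw [h0, supNorm_zero, mul_zero]
    positivity
  · obtain ⟨c₀, _⟩ := Function.ne_iff.mp h0
    haveI : Nonempty ((k : Fin r) × Fin (p k)) := ⟨c₀⟩
    have hcone : InCone βo w a ν :=
      cone_lemma X γ hγconv hγdiff yv βo βh w hw a lam ha hlam (hmin βo) hG
    have hβsum : βo + ν = βh := funext fun c => by simp [hν]
    have hgd : ∀ c, gradDiff X γ βo ν c
        = (∑ i, (deriv γ (dotRow X i βh) - yv i) * X i c)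
          - (∑ i, (deriv γ (dotRow X i βo) - yv i) * X i c) := by
      intro c
      unfold gradDiff
      rw [hβsum, ← Finset.sum_sub_distrib]
      exact Finset.sum_congr rfl fun i _ => by ring
    have hH : ∀ c, |∑ i, (deriv γ (dotRow X i βh) - yv i) * X i c| ≤ lam * w c :=
      fun c => coord_bound X γ hγdiff yv w hw lam hlam βh hmin c
    have hsup : supNorm (fun c => gradDiff X γ βo ν c / w c) ≤ (1 + a) * lam := by
      refine supNorm_le fun c => ?_
      rw [abs_div, abs_of_pos (hw c), div_le_iff₀ (hw c)]
      rw [hgd c]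
      calc |(∑ i, (deriv γ (dotRow X i βh) - yv i) * X i c)
            - (∑ i, (deriv γ (dotRow X i βo) - yv i) * X i c)|
          ≤ |∑ i, (deriv γ (dotRow X i βh) - yv i) * X i c|
            + |∑ i, (deriv γ (dotRow X i βo) - yv i) * X i c| := abs_sub _ _
        _ ≤ lam * w c + a * lam * w c := add_le_add (hH c) (hG c)
        _ = (1 + a) * lam * w c := by ring
    have hbdd : BddBelow {z : ℝ | ∃ ν' : ((k : Fin r) × Fin (p k)) → ℝ, ν' ≠ 0 ∧
        InCone βo w a ν' ∧ z = supNorm (fun c => gradDiff X γ βo ν' c / w c) / supNorm ν'} := by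
      refine ⟨0, ?_⟩
      rintro z ⟨ν', _, _, rfl⟩
      exact div_nonneg (supNorm_nonneg _) (supNorm_nonneg _)
    have hcif_le : cif X γ βo w a
        ≤ supNorm (fun c => gradDiff X γ βo ν c / w c) / supNorm ν :=
      csInf_le hbdd ⟨ν, h0, hcone, rfl⟩
    have hνpos : 0 < supNorm ν := supNorm_pos h0
    calc cif X γ βo w a * supNorm ν
        ≤ (supNorm (fun c => gradDiff X γ βo ν c / w c) / supNorm ν) * supNorm ν :=
          mul_le_mul_of_nonneg_right hcif_le hνpos.le
      _ = supNorm (fun c => gradDiff X γ βo ν c / w c) := div_mul_cancel₀ _ hνpos.ne'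
      _ ≤ (1 + a) * lam := hsup

end main2



lemma subg_mgf {Ω : Type*} [MeasurableSpace Ω] (P : Measure Ω) [IsProbabilityMeasure P]
    (f : Ω → ℝ) (hf : Measurable f) (K : ℝ)
    (h : ∫⁻ ω, ENNReal.ofReal (Real.exp (f ω)) ∂P ≤ ENNReal.ofReal (Real.exp K)) :
    Integrable (fun ω => Real.exp (f ω)) P ∧ ∫ ω, Real.exp (f ω) ∂P ≤ Real.exp K := by
  have hint : Integrable (fun ω => Real.exp (f ω)) P := by
    refine ⟨hf.exp.aestronglyMeasurable, ?_⟩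
    rw [hasFiniteIntegral_iff_ofReal (Filter.Eventually.of_forall fun ω => (Real.exp_pos _).le)]
    exact lt_of_le_of_lt h ENNReal.ofReal_lt_top
  refine ⟨hint, ?_⟩
  rw [integral_eq_lintegral_of_nonneg_ae (Filter.Eventually.of_forall fun ω => (Real.exp_pos _).le)
    hf.exp.aestronglyMeasurable]
  calc (∫⁻ ω, ENNReal.ofReal (Real.exp (f ω)) ∂P).toReal
      ≤ (ENNReal.ofReal (Real.exp K)).toReal := ENNReal.toReal_mono ENNReal.ofReal_ne_top h
    _ = Real.exp K := ENNReal.toReal_ofReal (Real.exp_pos _).le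

lemma subg_tail {Ω : Type*} [MeasurableSpace Ω] (P : Measure Ω) [IsProbabilityMeasure P]
    {n : ℕ} (y : Fin n → Ω → ℝ) (hymeas : ∀ i, Measurable (y i))
    (hindep : iIndepFun y P)
    (m : Fin n → ℝ) (σ : ℝ) (hσ : 0 < σ)
    (hsub : ∀ i, ∀ u : ℝ,
      ∫⁻ ω, ENNReal.ofReal (Real.exp (u * (y i ω - m i))) ∂P
        ≤ ENNReal.ofReal (Real.exp (σ ^ 2 * u ^ 2 / 2)))
    (b : Fin n → ℝ) (B : ℝ) (hB : 0 < B) (hb : ∑ i, (b i)^2 ≤ B^2)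
    (t : ℝ) (ht : 0 ≤ t) :
    P {ω | t ≤ |∑ i, b i * (y i ω - m i)|}
      ≤ ENNReal.ofReal (2 * Real.exp (-t^2 / (2 * σ^2 * B^2))) := by
  set Z : Fin n → Ω → ℝ := fun i ω => b i * (y i ω - m i) with hZ
  have hZmeas : ∀ i, Measurable (Z i) := fun i => ((hymeas i).sub_const (m i)).const_mul (b i)
  have hZindep : iIndepFun Z P :=
    hindep.comp (fun i x => b i * (x - m i))
      (fun i => (measurable_id.sub_const (m i)).const_mul (b i))
  -- per-coordinate mgf bound
  have key : ∀ (u : ℝ) (i : Fin n), Integrable (fun ω => Real.exp (u * Z i ω)) P ∧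
      mgf (Z i) P u ≤ Real.exp (σ ^ 2 * (u * b i) ^ 2 / 2) := by
    intro u i
    have h1 : ∀ ω, u * Z i ω = (u * b i) * (y i ω - m i) := fun ω => by simp [hZ]; ring
    have := subg_mgf P (fun ω => u * Z i ω) ((hZmeas i).const_mul u)
      (σ ^ 2 * (u * b i) ^ 2 / 2) ?_
    · exact ⟨this.1, this.2⟩
    · simp_rw [h1]; exact hsub i (u * b i)
  -- mgf of the sum
  have hsum_mgf : ∀ u : ℝ, mgf (∑ i, Z i) P u ≤ Real.exp (σ ^ 2 * u ^ 2 * B ^ 2 / 2) := by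
    intro u
    rw [hZindep.mgf_sum hZmeas]
    calc ∏ i, mgf (Z i) P u ≤ ∏ i, Real.exp (σ ^ 2 * (u * b i) ^ 2 / 2) :=
          Finset.prod_le_prod (fun i _ => mgf_nonneg) (fun i _ => (key u i).2)
      _ = Real.exp (∑ i, σ ^ 2 * (u * b i) ^ 2 / 2) := by rw [Real.exp_sum]
      _ ≤ Real.exp (σ ^ 2 * u ^ 2 * B ^ 2 / 2) := by
          apply Real.exp_le_exp.mpr
          have : ∑ i, σ ^ 2 * (u * b i) ^ 2 / 2 = σ ^ 2 * u ^ 2 * (∑ i, (b i)^2) / 2 := by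
            rw [Finset.mul_sum, Finset.sum_div]; congr 1; ext i; ring
          rw [this]
          have h2 : (0:ℝ) ≤ σ ^ 2 * u ^ 2 := by positivity
          nlinarith [hb]
  have hint_sum : ∀ u : ℝ, Integrable (fun ω => Real.exp (u * (∑ i, Z i) ω)) P := fun u =>
    hZindep.integrable_exp_mul_sum hZmeas (fun i _ => (key u i).1)
  set u : ℝ := t / (σ ^ 2 * B ^ 2) with hu
  have hu0 : 0 ≤ u := div_nonneg ht (by positivity)
  have hexp : Real.exp (-u * t) * Real.exp (σ ^ 2 * u ^ 2 * B ^ 2 / 2)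
      = Real.exp (-t^2 / (2 * σ^2 * B^2)) := by
    rw [← Real.exp_add]
    congr 1
    have hσB : σ ^ 2 * B ^ 2 ≠ 0 := by positivity
    field_simp [hu]
    have hut : u * (σ ^ 2 * B ^ 2) = t := by rw [hu]; exact div_mul_cancel₀ t hσB
    linear_combination (u * σ ^ 2 * B ^ 2 - t) * hut
  have hup : (P {ω | t ≤ (∑ i, Z i) ω}).toReal ≤ Real.exp (-t^2 / (2 * σ^2 * B^2)) := by
    calc (P {ω | t ≤ (∑ i, Z i) ω}).toReal
        ≤ Real.exp (-u * t) * mgf (∑ i, Z i) P u :=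
          measure_ge_le_exp_mul_mgf t hu0 (hint_sum u)
      _ ≤ Real.exp (-u * t) * Real.exp (σ ^ 2 * u ^ 2 * B ^ 2 / 2) := by
          exact mul_le_mul_of_nonneg_left (hsum_mgf u) (Real.exp_pos _).le
      _ = _ := hexp
  have hdown : (P {ω | (∑ i, Z i) ω ≤ -t}).toReal ≤ Real.exp (-t^2 / (2 * σ^2 * B^2)) := by
    calc (P {ω | (∑ i, Z i) ω ≤ -t}).toReal
        ≤ Real.exp (-(-u) * (-t)) * mgf (∑ i, Z i) P (-u) :=
          measure_le_le_exp_mul_mgf (-t) (neg_nonpos.mpr hu0) (hint_sum (-u))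
      _ ≤ Real.exp (-u * t) * Real.exp (σ ^ 2 * u ^ 2 * B ^ 2 / 2) := by
          have : (-(-u)) * (-t) = -u * t := by ring
          rw [this]
          refine mul_le_mul_of_nonneg_left ?_ (Real.exp_pos _).le
          have := hsum_mgf (-u)
          simpa using this
      _ = _ := hexp
  have hsub1 : {ω | t ≤ |∑ i, b i * (y i ω - m i)|}
      ⊆ {ω | t ≤ (∑ i, Z i) ω} ∪ {ω | (∑ i, Z i) ω ≤ -t} := by
    intro ω hω
    simp only [Set.mem_setOf_eq, Set.mem_union, Finset.sum_apply]
    rcases le_abs.mp (show t ≤ |∑ i, b i * (y i ω - m i)| from hω) with h | h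
    · left; exact h
    · right; linarith
  calc P {ω | t ≤ |∑ i, b i * (y i ω - m i)|}
      ≤ P ({ω | t ≤ (∑ i, Z i) ω} ∪ {ω | (∑ i, Z i) ω ≤ -t}) := measure_mono hsub1
    _ ≤ P {ω | t ≤ (∑ i, Z i) ω} + P {ω | (∑ i, Z i) ω ≤ -t} := measure_union_le _ _
    _ ≤ ENNReal.ofReal (Real.exp (-t^2 / (2 * σ^2 * B^2)))
        + ENNReal.ofReal (Real.exp (-t^2 / (2 * σ^2 * B^2))) := by
        gcongr
        · exact (ENNReal.le_ofReal_iff_toReal_le (measure_ne_top P _) (Real.exp_pos _).le).mpr hup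
        · exact (ENNReal.le_ofReal_iff_toReal_le (measure_ne_top P _) (Real.exp_pos _).le).mpr hdown
    _ = ENNReal.ofReal (2 * Real.exp (-t^2 / (2 * σ^2 * B^2))) := by
        rw [two_mul (Real.exp _), ENNReal.ofReal_add (Real.exp_pos _).le (Real.exp_pos _).le]

/-- The value of the coefficient of level `j` of factor `k`, with the convention that
the reference level (`none`) has coefficient `0`. -/
def levelVal {r : ℕ} {p : Fin r → ℕ} (β : ((k : Fin r) × Fin (p k)) → ℝ)
    (k : Fin r) (j : Option (Fin (p k))) : ℝ :=
  j.elim 0 (fun j' => β ⟨k, j'⟩)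

/-- Proposition 2 (non-asymptotic form): under the conditions of Proposition 1, if
`8(1+a)²a⁻²x_W²ζ⁻²σ² log(2p/α) ≤ τ²` and `τ² < Δ²/4`, then with probability at least
`1 − α`, merging levels whose Group Lasso coefficients differ by at most `τ` recovers
exactly the true model `M_{β°}`. -/
theorem glamer_proposition2
    {Ω : Type*} [MeasurableSpace Ω] (P : Measure Ω) [IsProbabilityMeasure P]
    {n r : ℕ} {p : Fin r → ℕ}
    (X : Fin n → ((k : Fin r) × Fin (p k)) → ℝ)
    (γ : ℝ → ℝ) (hγconv : ConvexOn ℝ Set.univ γ) (hγdiff : Differentiable ℝ γ)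
    (y : Fin n → Ω → ℝ) (hymeas : ∀ i, Measurable (y i))
    (hindep : iIndepFun y P)
    (βo : ((k : Fin r) × Fin (p k)) → ℝ)
    (hmean : ∀ i, ∫ ω, y i ω ∂P = deriv γ (dotRow X i βo))
    (σ : ℝ) (hσ : 0 < σ)
    (hsub : ∀ i, ∀ u : ℝ,
      ∫⁻ ω, ENNReal.ofReal (Real.exp (u * (y i ω - ∫ ω', y i ω' ∂P))) ∂P
        ≤ ENNReal.ofReal (Real.exp (σ ^ 2 * u ^ 2 / 2)))
    (w : ((k : Fin r) × Fin (p k)) → ℝ) (hw : ∀ c, 0 < w c)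
    (a : ℝ) (ha : a ∈ Set.Ioo (0 : ℝ) 1) (α : ℝ) (hα : α ∈ Set.Ioo (0 : ℝ) 1)
    (lam : ℝ) (hlam : 0 < lam)
    (hlam2 : lam ^ 2 = 2 * σ ^ 2 * (xW X w) ^ 2 *
      Real.log (2 * (Fintype.card ((k : Fin r) × Fin (p k))) / α) / a ^ 2)
    (βhat : Ω → ((k : Fin r) × Fin (p k)) → ℝ) (hβhat : Measurable βhat)
    (hmin : ∀ᵐ ω ∂P, ∀ β : ((k : Fin r) × Fin (p k)) → ℝ,
      loss X γ y ω (βhat ω) + lam * ∑ k : Fin r, groupNorm w (βhat ω) k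
        ≤ loss X γ y ω β + lam * ∑ k : Fin r, groupNorm w β k)
    (hζ : 0 < cif X γ βo w a)
    (τ Δ : ℝ) (hτ : 0 < τ) (hΔpos : 0 < Δ)
    (hΔ : ∀ (k : Fin r) (j₁ j₂ : Option (Fin (p k))),
      levelVal βo k j₁ ≠ levelVal βo k j₂ → Δ ≤ |levelVal βo k j₁ - levelVal βo k j₂|)
    (hτlow : 8 * (1 + a) ^ 2 * (xW X w) ^ 2 * σ ^ 2 *
      Real.log (2 * (Fintype.card ((k : Fin r) × Fin (p k))) / α) /
        (a ^ 2 * (cif X γ βo w a) ^ 2) ≤ τ ^ 2)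
    (hτhigh : τ ^ 2 < Δ ^ 2 / 4) :
    ENNReal.ofReal (1 - α) ≤
      P {ω | ∀ (k : Fin r) (j₁ j₂ : Option (Fin (p k))),
        |levelVal (βhat ω) k j₁ - levelVal (βhat ω) k j₂| ≤ τ ↔
          levelVal βo k j₁ = levelVal βo k j₂} := by
  classical
  have ha0 : 0 < a := ha.1
  have hα0 : 0 < α := hα.1
  have hxW0 : 0 ≤ xW X w :=
    Real.iSup_nonneg fun c => div_nonneg (Real.sqrt_nonneg _) (hw c).le
  have hlamsq : 0 < lam ^ 2 := by positivity
  have hxW : 0 < xW X w := by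
    rcases eq_or_lt_of_le hxW0 with h | h
    · exfalso
      have h0 : lam ^ 2 = 0 := by rw [hlam2, ← h]; ring
      nlinarith
    · exact h
  haveI hne : Nonempty ((k : Fin r) × Fin (p k)) := by
    rcases isEmpty_or_nonempty ((k : Fin r) × Fin (p k)) with he | hne
    · exfalso
      have h0 : xW X w = 0 := Real.iSup_of_isEmpty _
      nlinarith
    · exact hne
  have hcard0 : (0:ℝ) < (Fintype.card ((k : Fin r) × Fin (p k)) : ℝ) := by
    exact_mod_cast Fintype.card_pos
  set N : ℝ := (Fintype.card ((k : Fin r) × Fin (p k)) : ℝ) with hN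
  set L : ℝ := Real.log (2 * N / α) with hL_def
  have hL : 0 < L := by
    apply Real.log_pos
    rw [lt_div_iff₀ hα0]
    have hN1 : (1:ℝ) ≤ N := by rw [hN]; exact_mod_cast Fintype.card_pos
    nlinarith [hα.2]
  have hfact : a ^ 2 * lam ^ 2 = 2 * σ ^ 2 * (xW X w) ^ 2 * L := by
    rw [hlam2]; field_simp
  set m : Fin n → ℝ := fun i => deriv γ (dotRow X i βo) with hm
  set E : Set Ω := ⋂ c, {ω | |∑ i, X i c * (y i ω - m i)| ≤ a * lam * w c} with hE
  have hEmeas : MeasurableSet E := by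
    refine MeasurableSet.iInter fun c => ?_
    have hf : Measurable fun ω => |∑ i, X i c * (y i ω - m i)| := by
      apply Measurable.abs
      exact Finset.measurable_sum _ fun i _ => ((hymeas i).sub_const (m i)).const_mul (X i c)
    exact measurableSet_le hf measurable_const
  -- probability bound on the complement of E
  have hEc : P Eᶜ ≤ ENNReal.ofReal α := by
    have hsubE : Eᶜ ⊆ ⋃ c, {ω | a * lam * w c ≤ |∑ i, X i c * (y i ω - m i)|} := by
      intro ω hω
      simp only [hE, Set.compl_iInter, Set.mem_iUnion, Set.mem_compl_iff,
        Set.mem_setOf_eq] at hω ⊢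
      obtain ⟨c, hc⟩ := hω
      exact ⟨c, (not_le.mp hc).le⟩
    refine le_trans (measure_mono hsubE) (le_trans (measure_iUnion_fintype_le _ _) ?_)
    have hone : ∀ c, P {ω | a * lam * w c ≤ |∑ i, X i c * (y i ω - m i)|}
        ≤ ENNReal.ofReal (α / N) := by
      intro c
      have hcol : colNorm X c ≤ xW X w * w c := by
        have h1 : colNorm X c / w c ≤ xW X w := by
          unfold xW
          exact le_ciSup (f := fun c => colNorm X c / w c)
            (Set.Finite.bddAbove (Set.finite_range _)) c
        rw [div_le_iff₀ (hw c)] at h1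
        linarith
      have hb : ∑ i, (X i c) ^ 2 ≤ (xW X w * w c) ^ 2 := by
        have h2 : ∑ i, (X i c) ^ 2 = (colNorm X c) ^ 2 := by
          unfold colNorm
          rw [Real.sq_sqrt (by positivity)]
        rw [h2]
        exact pow_le_pow_left₀ (Real.sqrt_nonneg _) hcol 2
      have hsub' : ∀ i, ∀ u : ℝ,
          ∫⁻ ω, ENNReal.ofReal (Real.exp (u * (y i ω - m i))) ∂P
            ≤ ENNReal.ofReal (Real.exp (σ ^ 2 * u ^ 2 / 2)) := by
        intro i u
        have h3 := hsub i u
        rw [hmean i] at h3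
        exact h3
      have htail := subg_tail P y hymeas hindep m σ hσ hsub' (fun i => X i c)
        (xW X w * w c) (mul_pos hxW (hw c)) hb (a * lam * w c)
        (mul_pos (mul_pos ha0 hlam) (hw c)).le
      refine le_trans htail ?_
      apply ENNReal.ofReal_le_ofReal
      have hnum : (a * lam * w c) ^ 2 = L * (2 * σ ^ 2 * (xW X w * w c) ^ 2) := by
        calc (a * lam * w c) ^ 2 = (a ^ 2 * lam ^ 2) * (w c) ^ 2 := by ring
          _ = (2 * σ ^ 2 * (xW X w) ^ 2 * L) * (w c) ^ 2 := by rw [hfact]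
          _ = L * (2 * σ ^ 2 * (xW X w * w c) ^ 2) := by ring
      have hden : (0:ℝ) < 2 * σ ^ 2 * (xW X w * w c) ^ 2 :=
        mul_pos (mul_pos (by norm_num : (0:ℝ) < 2) (pow_pos hσ 2))
          (pow_pos (mul_pos hxW (hw c)) 2)
      have hexp_eq : -(a * lam * w c) ^ 2 / (2 * σ ^ 2 * (xW X w * w c) ^ 2) = -L := by
        rw [neg_div, hnum, mul_div_assoc, div_self hden.ne', mul_one]
      rw [hexp_eq]
      have heL : Real.exp (-L) = α / (2 * N) := by
        have h2N : (0:ℝ) < 2 * N / α := div_pos (by linarith) hα0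
        rw [Real.exp_neg, hL_def, Real.exp_log h2N, inv_div]
      rw [heL]
      rw [show 2 * (α / (2 * N)) = α / N from by field_simp]
    calc ∑ c, P {ω | a * lam * w c ≤ |∑ i, X i c * (y i ω - m i)|}
        ≤ ∑ _c : ((k : Fin r) × Fin (p k)), ENNReal.ofReal (α / N) :=
          Finset.sum_le_sum fun c _ => hone c
      _ = ENNReal.ofReal α := by
          rw [Finset.sum_const, Finset.card_univ, nsmul_eq_mul]
          have hcast : ((Fintype.card ((k : Fin r) × Fin (p k)) : ℕ) : ℝ≥0∞)
              = ENNReal.ofReal N := by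
            rw [hN, ENNReal.ofReal_natCast]
          rw [hcast, ← ENNReal.ofReal_mul hcard0.le]
          congr 1
          field_simp
  -- deterministic inclusion
  have hsubset : E ∩ {ω | ∀ β : ((k : Fin r) × Fin (p k)) → ℝ,
      loss X γ y ω (βhat ω) + lam * ∑ k : Fin r, groupNorm w (βhat ω) k
        ≤ loss X γ y ω β + lam * ∑ k : Fin r, groupNorm w β k}
      ⊆ {ω | ∀ (k : Fin r) (j₁ j₂ : Option (Fin (p k))),
        |levelVal (βhat ω) k j₁ - levelVal (βhat ω) k j₂| ≤ τ ↔
          levelVal βo k j₁ = levelVal βo k j₂} := by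
    rintro ω ⟨hEω, hminω⟩
    have hEω' : ∀ c, |∑ i, X i c * (y i ω - m i)| ≤ a * lam * w c := by
      intro c
      exact Set.mem_iInter.mp hEω c
    have hmin' : ∀ β : ((k : Fin r) × Fin (p k)) → ℝ,
        (∑ i, (γ (dotRow X i (βhat ω)) - y i ω * dotRow X i (βhat ω)))
            + lam * ∑ k, groupNorm w (βhat ω) k
          ≤ (∑ i, (γ (dotRow X i β) - y i ω * dotRow X i β))
            + lam * ∑ k, groupNorm w β k := by
      intro β
      have := hminω β
      simpa [loss] using this
    have hG' : ∀ c, |∑ i, (deriv γ (dotRow X i βo) - y i ω) * X i c| ≤ a * lam * w c := by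
      intro c
      have e : (∑ i, (deriv γ (dotRow X i βo) - y i ω) * X i c)
          = -(∑ i, X i c * (y i ω - m i)) := by
        rw [← Finset.sum_neg_distrib]
        exact Finset.sum_congr rfl fun i _ => by rw [hm]; ring
      rw [e, abs_neg]
      exact hEω' c
    have hdet := det_main X γ hγconv hγdiff (fun i => y i ω) βo (βhat ω) w hw a lam
      ha0 hlam hmin' hG'
    set ν : ((k : Fin r) × Fin (p k)) → ℝ := fun c => βhat ω c - βo c with hν
    have hζpos := hζ
    have hsupν : supNorm ν ≤ (1 + a) * lam / cif X γ βo w a := by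
      rw [le_div_iff₀ hζpos]
      calc supNorm ν * cif X γ βo w a = cif X γ βo w a * supNorm ν := by ring
        _ ≤ (1 + a) * lam := hdet
    have harith : (1 + a) * lam / cif X γ βo w a ≤ τ / 2 := by
      have e : (2 * ((1 + a) * lam / cif X γ βo w a)) ^ 2
          = 8 * (1 + a) ^ 2 * (xW X w) ^ 2 * σ ^ 2 * L / (a ^ 2 * (cif X γ βo w a) ^ 2) := by
        rw [mul_pow, div_pow, mul_pow, hlam2]
        field_simp
        ring
      have key : (2 * ((1 + a) * lam / cif X γ βo w a)) ^ 2 ≤ τ ^ 2 := by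
        rw [e]; exact hτlow
      have h2 : 2 * ((1 + a) * lam / cif X γ βo w a) ≤ τ :=
        le_of_pow_le_pow_left₀ two_ne_zero hτ.le key
      linarith
    have hsup2 : supNorm ν ≤ τ / 2 := le_trans hsupν harith
    have percoord : ∀ c, |βhat ω c - βo c| ≤ τ / 2 := by
      intro c
      exact le_trans (le_supNorm ν c) hsup2
    have hlev : ∀ (k : Fin r) (j : Option (Fin (p k))),
        |levelVal (βhat ω) k j - levelVal βo k j| ≤ τ / 2 := by
      intro k j
      cases j with
      | none => simpa [levelVal] using (by linarith : (0:ℝ) ≤ τ / 2)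
      | some j' => exact percoord ⟨k, j'⟩
    have h2τ : 2 * τ < Δ := by
      have hsq : (2 * τ) ^ 2 < Δ ^ 2 := by nlinarith
      exact lt_of_pow_lt_pow_left₀ 2 hΔpos.le hsq
    intro k j₁ j₂
    constructor
    · intro hle
      by_contra hne'
      have hΔ' := hΔ k j₁ j₂ hne'
      have e1 := hlev k j₁
      have e2 := hlev k j₂
      have t1 : |levelVal βo k j₁ - levelVal βo k j₂|
          ≤ |levelVal βo k j₁ - levelVal (βhat ω) k j₁|
            + |levelVal (βhat ω) k j₁ - levelVal βo k j₂| := abs_sub_le _ _ _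
      have t2 : |levelVal (βhat ω) k j₁ - levelVal βo k j₂|
          ≤ |levelVal (βhat ω) k j₁ - levelVal (βhat ω) k j₂|
            + |levelVal (βhat ω) k j₂ - levelVal βo k j₂| := abs_sub_le _ _ _
      rw [abs_sub_comm (levelVal βo k j₁) (levelVal (βhat ω) k j₁)] at t1
      linarith
    · intro heq
      have e1 := hlev k j₁
      have e2 := hlev k j₂
      have e : levelVal (βhat ω) k j₁ - levelVal (βhat ω) k j₂
          = (levelVal (βhat ω) k j₁ - levelVal βo k j₁)
            - (levelVal (βhat ω) k j₂ - levelVal βo k j₂) := by rw [heq]; ring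
      rw [e]
      calc |(levelVal (βhat ω) k j₁ - levelVal βo k j₁)
            - (levelVal (βhat ω) k j₂ - levelVal βo k j₂)|
          ≤ |levelVal (βhat ω) k j₁ - levelVal βo k j₁|
            + |levelVal (βhat ω) k j₂ - levelVal βo k j₂| := abs_sub _ _
        _ ≤ τ := by linarith
  -- probability glue
  have hPE : ENNReal.ofReal (1 - α) ≤ P E := by
    have h1 : P E = 1 - P Eᶜ := by
      have := prob_compl_eq_one_sub (μ := P) hEmeas.compl
      rwa [compl_compl] at this
    rw [h1, ENNReal.ofReal_sub 1 hα0.le, ENNReal.ofReal_one]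
    exact tsub_le_tsub_left hEc 1
  set Mset : Set Ω := {ω | ∀ β : ((k : Fin r) × Fin (p k)) → ℝ,
      loss X γ y ω (βhat ω) + lam * ∑ k : Fin r, groupNorm w (βhat ω) k
        ≤ loss X γ y ω β + lam * ∑ k : Fin r, groupNorm w β k} with hMset
  have hMnull : P Msetᶜ = 0 := by
    rw [hMset]
    exact ae_iff.mp hmin
  have hPEgood : P E ≤ P (E ∩ Mset) := by
    have hsplit : E ⊆ (E ∩ Mset) ∪ Msetᶜ := by
      intro ω hω
      by_cases h : ω ∈ Mset
      · exact Or.inl ⟨hω, h⟩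
      · exact Or.inr h
    calc P E ≤ P ((E ∩ Mset) ∪ Msetᶜ) := measure_mono hsplit
      _ ≤ P (E ∩ Mset) + P Msetᶜ := measure_union_le _ _
      _ = P (E ∩ Mset) := by rw [hMnull, add_zero]
  exact le_trans hPE (le_trans hPEgood (measure_mono hsubset))
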